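/- For any subnormalized bipartite state ρ_{AB}, the conditional min-entropy satisfies H_min(A|B)_ρ ≥ H_min(AB)_ρ − H₀(B)_ρ, where H_min(AB)_ρ = −log‖ρ_{AB}‖_∞ and H₀(B)_ρ = log rank(ρ_B). -/

import Mathlib

open scoped Classical Kronecker ComplexOrder

noncomputable section

namespace QIT

variable {ι κ γ : Type*} [Fintype ι] [DecidableEq ι] [Fintype κ] [DecidableEq κ]
  [Fintype γ] [DecidableEq γ]

/-- The old Mathlib `Matrix.PosSemidef.sqrt` (removed), spelled out. -/
def psdSqrt {A : Matrix ι ι ℂ} (hA : A.PosSemidef) : Matrix ι ι ℂ :=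
  hA.1.eigenvectorUnitary * Matrix.diagonal (((↑) : ℝ → ℂ) ∘ Real.sqrt ∘ hA.1.eigenvalues) *
    (star hA.1.eigenvectorUnitary : Matrix ι ι ℂ)

/-- Trace norm `‖A‖₁ = tr √(AᴴA)`. -/
def traceNorm (A : Matrix ι ι ℂ) : ℝ :=
  (psdSqrt (Matrix.posSemidef_conjTranspose_mul_self A)).trace.re

/-- Matrix square root (of a PSD matrix; junk value `0` otherwise). -/
def msqrt (A : Matrix ι ι ℂ) : Matrix ι ι ℂ :=
  if h : A.PosSemidef then psdSqrt h else 0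

/-- Fidelity `F(ρ,σ) = ‖√ρ√σ‖₁`. -/
def fidelity (ρ σ : Matrix ι ι ℂ) : ℝ := traceNorm (msqrt ρ * msqrt σ)

/-- Generalized fidelity. -/
def genFid (ρ σ : Matrix ι ι ℂ) : ℝ :=
  fidelity ρ σ + Real.sqrt ((1 - ρ.trace.re) * (1 - σ.trace.re))

/-- Purified distance. -/
def purifiedDist (ρ σ : Matrix ι ι ℂ) : ℝ := Real.sqrt (1 - genFid ρ σ ^ 2)

def IsSubnormalized (ρ : Matrix ι ι ℂ) : Prop := ρ.PosSemidef ∧ ρ.trace.re ≤ 1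

def IsDensity (ρ : Matrix ι ι ℂ) : Prop := ρ.PosSemidef ∧ ρ.trace = 1

/-- Max-relative entropy `D_max(ρ‖σ) = inf {λ : 2^λ σ ≥ ρ}`. -/
def Dmax (ρ σ : Matrix ι ι ℂ) : ℝ :=
  sInf {l : ℝ | ((((2:ℝ) ^ l : ℝ) : ℂ) • σ - ρ).PosSemidef}

/-- Partial trace over the first factor. -/
def ptrace₁ (ρ : Matrix (ι × κ) (ι × κ) ℂ) : Matrix κ κ ℂ :=
  Matrix.of fun (b b' : κ) => ∑ a, ρ (a, b) (a, b')

/-- Partial trace over the second factor. -/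
def ptrace₂ (ρ : Matrix (ι × κ) (ι × κ) ℂ) : Matrix ι ι ℂ :=
  Matrix.of fun (a a' : ι) => ∑ b, ρ (a, b) (a', b)

/-- Max-information `I_max(A:B)_ρ = inf_{σ_B} D_max(ρ_{AB}‖ρ_A ⊗ σ_B)`. -/
def Imax (ρ : Matrix (ι × κ) (ι × κ) ℂ) : ℝ :=
  sInf {x : ℝ | ∃ σ : Matrix κ κ ℂ, IsDensity σ ∧ x = Dmax ρ (ptrace₂ ρ ⊗ₖ σ)}

/-- Conditional min-entropy `H_min(A|B)_ρ = −inf_{σ_B} D_max(ρ_{AB}‖Id_A ⊗ σ_B)`. -/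
def HminCond (ρ : Matrix (ι × κ) (ι × κ) ℂ) : ℝ :=
  - sInf {x : ℝ | ∃ σ : Matrix κ κ ℂ, IsDensity σ ∧ x = Dmax ρ ((1 : Matrix ι ι ℂ) ⊗ₖ σ)}

/-- Largest eigenvalue (operator norm for PSD matrices). -/
def maxEig (ρ : Matrix ι ι ℂ) : ℝ :=
  if h : ρ.IsHermitian then ⨆ i, h.eigenvalues i else 0

/-- Zero-Rényi entropy `H₀ = log rank`. -/
def H0 (ρ : Matrix ι ι ℂ) : ℝ := Real.logb 2 ρ.rank

/-- Min-entropy `H_min = −log ‖ρ‖_∞`. -/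
def Hmin (ρ : Matrix ι ι ℂ) : ℝ := - Real.logb 2 (maxEig ρ)

/-- Max-entropy `H_max = 2 log tr √ρ`. -/
def Hmax (ρ : Matrix ι ι ℂ) : ℝ := 2 * Real.logb 2 (msqrt ρ).trace.re

def smoothH0 (ε : ℝ) (ρ : Matrix ι ι ℂ) : ℝ :=
  sInf {x : ℝ | ∃ σ : Matrix ι ι ℂ, IsSubnormalized σ ∧ purifiedDist σ ρ ≤ ε ∧ x = H0 σ}

def smoothHmax (ε : ℝ) (ρ : Matrix ι ι ℂ) : ℝ :=
  sInf {x : ℝ | ∃ σ : Matrix ι ι ℂ, IsSubnormalized σ ∧ purifiedDist σ ρ ≤ ε ∧ x = Hmax σ}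

def smoothImax (ε : ℝ) (ρ : Matrix (ι × κ) (ι × κ) ℂ) : ℝ :=
  sInf {x : ℝ | ∃ σ : Matrix (ι × κ) (ι × κ) ℂ,
    IsSubnormalized σ ∧ purifiedDist σ ρ ≤ ε ∧ x = Imax σ}


open scoped Matrix

set_option linter.unusedSectionVars false

section AuxHelpers

lemma kron_conjT (A : Matrix ι ι ℂ) (B : Matrix κ κ ℂ) :
    (A ⊗ₖ B)ᴴ = Aᴴ ⊗ₖ Bᴴ := by
  ext ⟨a, b⟩ ⟨c, d⟩
  simp [Matrix.conjTranspose_apply, Matrix.kroneckerMap_apply, star_mul']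

lemma psd_smul {A : Matrix ι ι ℂ} (hA : A.PosSemidef) {c : ℝ} (hc : 0 ≤ c) :
    ((c : ℂ) • A).PosSemidef := by
  exact hA.smul (by exact_mod_cast Complex.zero_le_real.mpr hc)

lemma psdSqrt_conjT {A : Matrix ι ι ℂ} (hA : A.PosSemidef) : (psdSqrt hA)ᴴ = psdSqrt hA := by
  unfold psdSqrt
  rw [Matrix.conjTranspose_mul, Matrix.conjTranspose_mul, Matrix.diagonal_conjTranspose,
    ← Matrix.star_eq_conjTranspose, ← Matrix.star_eq_conjTranspose, star_star, Matrix.mul_assoc]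
  congr 3
  funext i
  simp [Complex.conj_ofReal]

lemma psdSqrt_mul_self {A : Matrix ι ι ℂ} (hA : A.PosSemidef) : psdSqrt hA * psdSqrt hA = A := by
  have hUU : (star hA.1.eigenvectorUnitary : Matrix ι ι ℂ) * hA.1.eigenvectorUnitary = 1 :=
    Unitary.coe_star_mul_self _
  have hD : Matrix.diagonal (((↑) : ℝ → ℂ) ∘ Real.sqrt ∘ hA.1.eigenvalues) *
      Matrix.diagonal (((↑) : ℝ → ℂ) ∘ Real.sqrt ∘ hA.1.eigenvalues)
        = Matrix.diagonal (RCLike.ofReal ∘ hA.1.eigenvalues) := by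
    rw [Matrix.diagonal_mul_diagonal]
    congr 1
    funext i
    simp only [Function.comp_apply]
    rw [← Complex.ofReal_mul, Real.mul_self_sqrt (hA.eigenvalues_nonneg i)]
    rfl
  unfold psdSqrt
  conv_rhs => rw [hA.1.spectral_theorem, Unitary.conjStarAlgAut_apply]
  rw [← hD]
  simp only [Matrix.mul_assoc]
  rw [← Matrix.mul_assoc (star _ : Matrix ι ι ℂ) _ _, hUU, Matrix.one_mul]

lemma psd_exists_conjT {A : Matrix ι ι ℂ} (hA : A.PosSemidef) : ∃ C : Matrix ι ι ℂ, A = Cᴴ * C :=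
  ⟨psdSqrt hA, by rw [psdSqrt_conjT, psdSqrt_mul_self]⟩

lemma psd_kron {A : Matrix ι ι ℂ} {B : Matrix κ κ ℂ} (hA : A.PosSemidef) (hB : B.PosSemidef) :
    (A ⊗ₖ B).PosSemidef := by
  obtain ⟨C, rfl⟩ := psd_exists_conjT hA
  obtain ⟨D, rfl⟩ := psd_exists_conjT hB
  rw [Matrix.mul_kronecker_mul, ← kron_conjT]
  exact Matrix.posSemidef_conjTranspose_mul_self _

lemma trace_conjT_mul_self (C : Matrix ι ι ℂ) :
    (Cᴴ * C).trace = ((∑ i, ∑ k, Complex.normSq (C k i) : ℝ) : ℂ) := by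
  rw [Matrix.trace]
  simp only [Matrix.diag_apply, Matrix.mul_apply, Matrix.conjTranspose_apply]
  push_cast
  refine Finset.sum_congr rfl fun i _ => Finset.sum_congr rfl fun k _ => ?_
  rw [Complex.star_def, mul_comm, Complex.mul_conj]

lemma eq_zero_of_trace_conjT_mul_self {C : Matrix ι ι ℂ} (h : (Cᴴ * C).trace = 0) :
    C = 0 := by
  rw [trace_conjT_mul_self] at h
  have h' : (∑ i, ∑ k, Complex.normSq (C k i) : ℝ) = 0 := by exact_mod_cast h
  have hnn : ∀ i ∈ Finset.univ, (0:ℝ) ≤ ∑ k, Complex.normSq (C k i) :=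
    fun i _ => Finset.sum_nonneg fun k _ => Complex.normSq_nonneg _
  ext k i
  have h1 := (Finset.sum_eq_zero_iff_of_nonneg hnn).mp h' i (Finset.mem_univ i)
  have h2 := (Finset.sum_eq_zero_iff_of_nonneg
    (fun k _ => Complex.normSq_nonneg (C k i))).mp h1 k (Finset.mem_univ k)
  simpa using Complex.normSq_eq_zero.mp h2

lemma psd_trace_re_nonneg {A : Matrix ι ι ℂ} (hA : A.PosSemidef) : 0 ≤ A.trace.re := by
  obtain ⟨C, rfl⟩ := psd_exists_conjT hA
  rw [trace_conjT_mul_self, Complex.ofReal_re]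
  exact Finset.sum_nonneg fun i _ => Finset.sum_nonneg fun k _ => Complex.normSq_nonneg _

lemma psd_eq_zero_of_trace_re {A : Matrix ι ι ℂ} (hA : A.PosSemidef) (h : A.trace.re = 0) :
    A = 0 := by
  obtain ⟨C, rfl⟩ := psd_exists_conjT hA
  have hC : C = 0 := by
    apply eq_zero_of_trace_conjT_mul_self (C := C)
    rw [trace_conjT_mul_self] at h ⊢
    rw [Complex.ofReal_re] at h
    rw [h]; norm_num
  rw [hC]; simp


lemma trace_ptrace (ρ : Matrix (ι × κ) (ι × κ) ℂ) : (ptrace₁ ρ).trace = ρ.trace := by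
  rw [Matrix.trace, Matrix.trace]
  simp only [Matrix.diag_apply, ptrace₁, Matrix.of_apply]
  rw [Fintype.sum_prod_type, Finset.sum_comm]

lemma ptrace₁_isHermitian {ρ : Matrix (ι × κ) (ι × κ) ℂ} (hρ : ρ.IsHermitian) :
    (ptrace₁ ρ).IsHermitian := by
  ext b b'
  simp only [Matrix.conjTranspose_apply, ptrace₁, Matrix.of_apply, star_sum]
  refine Finset.sum_congr rfl fun a _ => ?_
  exact congr_fun (congr_fun hρ (a, b)) (a, b')

lemma trace_mul_one_kron (ρ : Matrix (ι × κ) (ι × κ) ℂ) (M : Matrix κ κ ℂ) :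
    (ρ * ((1 : Matrix ι ι ℂ) ⊗ₖ M)).trace = (ptrace₁ ρ * M).trace := by
  rw [Matrix.trace, Matrix.trace]
  simp only [Matrix.diag_apply, Matrix.mul_apply, ptrace₁, Matrix.of_apply,
    Matrix.kroneckerMap_apply, Matrix.one_apply, Fintype.sum_prod_type, ite_mul, one_mul,
    zero_mul, mul_ite, mul_zero, mul_one, Finset.sum_ite_eq, Finset.sum_ite_eq',
    Finset.mem_univ, if_true, Finset.sum_mul]
  have key : ∀ (x : ι) (x1 : κ),
      (∑ x2 : ι, ∑ x3 : κ, if x2 = x then ρ (x, x1) (x2, x3) * M x3 x1 else 0)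
        = ∑ x3, ρ (x, x1) (x, x3) * M x3 x1 := by
    intro x x1
    rw [Finset.sum_comm]
    refine Finset.sum_congr rfl fun x3 _ => ?_
    simp
  calc (∑ x : ι, ∑ x1 : κ, ∑ x2 : ι, ∑ x3 : κ,
        if x2 = x then ρ (x, x1) (x2, x3) * M x3 x1 else 0)
      = ∑ x : ι, ∑ x1 : κ, ∑ x3 : κ, ρ (x, x1) (x, x3) * M x3 x1 := by
        exact Finset.sum_congr rfl fun x _ => Finset.sum_congr rfl fun x1 _ => key x x1
    _ = ∑ x1 : κ, ∑ x : ι, ∑ x3 : κ, ρ (x, x1) (x, x3) * M x3 x1 := Finset.sum_comm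
    _ = ∑ x1 : κ, ∑ x3 : κ, ∑ x : ι, ρ (x, x1) (x, x3) * M x3 x1 :=
        Finset.sum_congr rfl fun x1 _ => Finset.sum_comm


lemma smul_one_sub_psd {A : Matrix κ κ ℂ} (hA : A.IsHermitian) {m : ℝ}
    (hle : ∀ i, hA.eigenvalues i ≤ m) : (((m : ℝ) : ℂ) • 1 - A).PosSemidef := by
  set U : Matrix κ κ ℂ := ↑(hA.eigenvectorUnitary) with hU
  have hUU : U * star U = 1 := (Matrix.mem_unitaryGroup_iff).mp hA.eigenvectorUnitary.2
  have hdecomp : ((m : ℂ) • 1 - A)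
      = U * Matrix.diagonal (fun i => ((m - hA.eigenvalues i : ℝ) : ℂ)) * Uᴴ := by
    rw [← Matrix.star_eq_conjTranspose]
    have h1 : U * ((m : ℂ) • (1 : Matrix κ κ ℂ)) * star U = (m : ℂ) • (1 : Matrix κ κ ℂ) := by
      rw [Matrix.mul_smul, Matrix.smul_mul, Matrix.mul_one, hUU]
    have h2 : (Matrix.diagonal (fun i => ((m - hA.eigenvalues i : ℝ) : ℂ)))
        = (m : ℂ) • (1 : Matrix κ κ ℂ) - Matrix.diagonal (RCLike.ofReal ∘ hA.eigenvalues) := by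
      rw [Matrix.smul_one_eq_diagonal, Matrix.diagonal_sub]
      exact congrArg Matrix.diagonal (funext fun i => by
        simp only [Function.comp_apply]; push_cast; rfl)
    rw [h2, Matrix.mul_sub, Matrix.sub_mul, h1]
    rw [hU]
    conv_lhs => rw [hA.spectral_theorem, Unitary.conjStarAlgAut_apply]
  rw [hdecomp]
  apply Matrix.PosSemidef.mul_mul_conjTranspose_same
  refine Matrix.posSemidef_diagonal_iff.mpr fun i => ?_
  rw [Complex.zero_le_real]
  linarith [hle i]

lemma eq_zero_of_eigenvalues_zero {A : Matrix κ κ ℂ} (hA : A.IsHermitian)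
    (h0 : ∀ i, hA.eigenvalues i = 0) : A = 0 := by
  rw [hA.spectral_theorem]
  have : Matrix.diagonal (RCLike.ofReal ∘ hA.eigenvalues) = (0 : Matrix κ κ ℂ) := by
    rw [show RCLike.ofReal ∘ hA.eigenvalues = fun _ => (0:ℂ) by funext i; simp [h0 i],
      Matrix.diagonal_zero]
  rw [this, map_zero]

lemma exists_support_proj {B : Matrix κ κ ℂ} (hB : B.IsHermitian) :
    ∃ P : Matrix κ κ ℂ, P.PosSemidef ∧ P * P = P ∧ Pᴴ = P ∧ B * P = B ∧
      P.trace = (B.rank : ℂ) := by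
  set U : Matrix κ κ ℂ := ↑(hB.eigenvectorUnitary) with hU
  have hUU : U * star U = 1 := (Matrix.mem_unitaryGroup_iff).mp hB.eigenvectorUnitary.2
  have hU'U : star U * U = 1 := mul_eq_one_comm.mp hUU
  set d : κ → ℂ := fun i => if hB.eigenvalues i = 0 then 0 else 1 with hd
  have hd2 : (fun i => d i * d i) = d := by
    funext i; by_cases h : hB.eigenvalues i = 0 <;> simp [hd, h]
  have hds : star d = d := by
    funext i; by_cases h : hB.eigenvalues i = 0 <;> simp [hd, h]
  have hed : (fun i => (RCLike.ofReal ∘ hB.eigenvalues) i * d i)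
      = (RCLike.ofReal ∘ hB.eigenvalues) := by
    funext i; by_cases h : hB.eigenvalues i = 0 <;> simp [hd, h]
  refine ⟨U * Matrix.diagonal d * star U, ?_, ?_, ?_, ?_, ?_⟩
  · rw [Matrix.star_eq_conjTranspose]
    apply Matrix.PosSemidef.mul_mul_conjTranspose_same
    refine Matrix.posSemidef_diagonal_iff.mpr fun i => ?_
    by_cases h : hB.eigenvalues i = 0 <;> simp [hd, h]
  · calc U * Matrix.diagonal d * star U * (U * Matrix.diagonal d * star U)
        = U * (Matrix.diagonal d * (star U * U) * Matrix.diagonal d) * star U := by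
          noncomm_ring
      _ = U * Matrix.diagonal d * star U := by
          rw [hU'U, Matrix.mul_one, Matrix.diagonal_mul_diagonal, hd2]
  · calc (U * Matrix.diagonal d * star U)ᴴ
        = star (U * Matrix.diagonal d * star U) := (Matrix.star_eq_conjTranspose _).symm
      _ = U * (star (Matrix.diagonal d) * star U) := by
          rw [star_mul, star_mul, star_star]
      _ = U * Matrix.diagonal d * star U := by
          rw [Matrix.star_eq_conjTranspose (Matrix.diagonal d),
            Matrix.diagonal_conjTranspose, hds, Matrix.mul_assoc]
  · conv_lhs => rw [hB.spectral_theorem, Unitary.conjStarAlgAut_apply, ← hU]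
    calc U * Matrix.diagonal (RCLike.ofReal ∘ hB.eigenvalues) * star U *
          (U * Matrix.diagonal d * star U)
        = U * (Matrix.diagonal (RCLike.ofReal ∘ hB.eigenvalues) * (star U * U) *
            Matrix.diagonal d) * star U := by noncomm_ring
      _ = U * Matrix.diagonal (RCLike.ofReal ∘ hB.eigenvalues) * star U := by
          rw [hU'U, Matrix.mul_one, Matrix.diagonal_mul_diagonal, hed]
      _ = B := by
          rw [hU]
          conv_rhs => rw [hB.spectral_theorem, Unitary.conjStarAlgAut_apply]
  · rw [Matrix.trace_mul_cycle, hU'U, Matrix.one_mul, Matrix.trace_diagonal]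
    rw [hB.rank_eq_card_non_zero_eigs, Fintype.card_subtype]
    rw [show (∑ i, d i) = ∑ i, if hB.eigenvalues i ≠ 0 then (1:ℂ) else 0 by
      refine Finset.sum_congr rfl fun i _ => ?_
      by_cases h : hB.eigenvalues i = 0 <;> simp [hd, h]]
    rw [Finset.sum_boole]


end AuxHelpers

/-- `H_min(A|B)_ρ ≥ H_min(AB)_ρ − H₀(B)_ρ`. -/
theorem hminCond_ge (ρ : Matrix (ι × κ) (ι × κ) ℂ) (h : IsSubnormalized ρ) :
    HminCond ρ ≥ Hmin ρ - H0 (ptrace₁ ρ) := by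
  by_cases hρ0 : ρ = 0
  · -- degenerate case ρ = 0
    subst hρ0
    have hmax : maxEig (0 : Matrix (ι × κ) (ι × κ) ℂ) = 0 := by
      have hH0 : (0 : Matrix (ι × κ) (ι × κ) ℂ).IsHermitian := Matrix.isHermitian_zero
      have heig : ∀ i, hH0.eigenvalues i = 0 := by
        intro i
        exact congr_fun ((Matrix.IsHermitian.eigenvalues_eq_zero_iff hH0).mpr rfl) i
      unfold maxEig
      rw [dif_pos hH0]
      cases isEmpty_or_nonempty (ι × κ) with
      | inl hempty => exact Real.iSup_of_isEmpty _
      | inr hne => simp [heig]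
    have hpt : ptrace₁ (0 : Matrix (ι × κ) (ι × κ) ℂ) = 0 := by
      ext b b'
      simp [ptrace₁]
    have hRHS : Hmin (0 : Matrix (ι × κ) (ι × κ) ℂ)
        - H0 (ptrace₁ (0 : Matrix (ι × κ) (ι × κ) ℂ)) = 0 := by
      rw [Hmin, H0, hmax, hpt, Matrix.rank_zero, Real.logb_zero]
      norm_num
    rw [hRHS, HminCond, ge_iff_le, le_neg, neg_zero]
    set S := {x : ℝ | ∃ σ : Matrix κ κ ℂ, IsDensity σ ∧
      x = Dmax 0 ((1 : Matrix ι ι ℂ) ⊗ₖ σ)} with hSdef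
    have hsub : ∀ x ∈ S, x = 0 := by
      rintro x ⟨σ, hσ, rfl⟩
      rw [Dmax]
      have huniv : {l : ℝ | ((((2:ℝ) ^ l : ℝ) : ℂ) • ((1 : Matrix ι ι ℂ) ⊗ₖ σ)
          - 0).PosSemidef} = Set.univ := by
        ext l
        simp only [Set.mem_setOf_eq, Set.mem_univ, iff_true, sub_zero]
        exact psd_smul (psd_kron Matrix.PosSemidef.one hσ.1)
          (le_of_lt (Real.rpow_pos_of_pos two_pos l))
      rw [huniv, csInf_of_not_bddBelow (by simpa using not_bddBelow_univ (α := ℝ)),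
        Real.sInf_empty]
    rcases Set.eq_empty_or_nonempty S with he | ⟨x, hx⟩
    · rw [he, Real.sInf_empty]
    · have h4 : sInf S ≤ x := csInf_le ⟨0, fun y hy => (hsub y hy).ge⟩ hx
      rwa [hsub x hx] at h4
  · -- main case ρ ≠ 0
    have hρ := h.1
    have hH : ρ.IsHermitian := hρ.isHermitian
    have hne : Nonempty (ι × κ) := by
      by_contra hni
      rw [not_nonempty_iff] at hni
      exact hρ0 (by ext i j; exact (hni.false i).elim)
    have hι : Nonempty ι := ⟨hne.some.1⟩
    have hκ : Nonempty κ := ⟨hne.some.2⟩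
    set t : ℝ := ρ.trace.re with htdef
    have ht0 : 0 ≤ t := psd_trace_re_nonneg hρ
    have ht : 0 < t := by
      rcases ht0.lt_or_eq with h' | h'
      · exact h'
      · exact absurd (psd_eq_zero_of_trace_re hρ h'.symm) hρ0
    -- max eigenvalue
    have hmeq : maxEig ρ = ⨆ i, hH.eigenvalues i := by
      unfold maxEig
      rw [dif_pos hH]
    set m : ℝ := maxEig ρ with hmdef
    have hbddA : BddAbove (Set.range hH.eigenvalues) :=
      Set.Finite.bddAbove (Set.finite_range _)
    have hile : ∀ i, hH.eigenvalues i ≤ m := by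
      intro i
      rw [hmeq]
      exact le_ciSup hbddA i
    have hmpos : 0 < m := by
      have hex : ∃ i, 0 < hH.eigenvalues i := by
        by_contra hcon
        push_neg at hcon
        exact hρ0 (eq_zero_of_eigenvalues_zero hH fun i =>
          le_antisymm (hcon i) (hρ.eigenvalues_nonneg i))
      obtain ⟨i0, hi0⟩ := hex
      exact lt_of_lt_of_le hi0 (hile i0)
    -- reduced state
    have hB : (ptrace₁ ρ).IsHermitian := ptrace₁_isHermitian hH
    set n : ℕ := (ptrace₁ ρ).rank with hndef
    have hn : 0 < n := by
      rcases Nat.eq_zero_or_pos n with h' | h'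
      · exfalso
        rw [hndef, hB.rank_eq_card_non_zero_eigs] at h'
        have hemp := Fintype.card_eq_zero_iff.mp h'
        have hzero : ∀ i, hB.eigenvalues i = 0 := by
          intro i
          by_contra hh
          exact hemp.false ⟨i, hh⟩
        have hB0 : ptrace₁ ρ = 0 := eq_zero_of_eigenvalues_zero hB hzero
        have : ρ.trace = 0 := by rw [← trace_ptrace, hB0, Matrix.trace_zero]
        rw [htdef, this] at ht
        simp at ht
      · exact h'
    have hnC : ((n : ℕ) : ℂ) ≠ 0 := by exact_mod_cast hn.ne'
    -- support projection of the reduced state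
    obtain ⟨P, hPpsd, hPP, hPH, hBP, hPtr⟩ := exists_support_proj hB
    set Q : Matrix κ κ ℂ := 1 - P with hQdef
    set K : Matrix (ι × κ) (ι × κ) ℂ := (1 : Matrix ι ι ℂ) ⊗ₖ Q with hKdef
    set L : Matrix (ι × κ) (ι × κ) ℂ := (1 : Matrix ι ι ℂ) ⊗ₖ P with hLdef
    have hBQ : ptrace₁ ρ * Q = 0 := by
      rw [hQdef, Matrix.mul_sub, Matrix.mul_one, hBP, sub_self]
    have hQH : Qᴴ = Q := by
      rw [hQdef, Matrix.conjTranspose_sub, Matrix.conjTranspose_one, hPH]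
    have hPQ : P * Q = 0 := by
      rw [hQdef, Matrix.mul_sub, Matrix.mul_one, hPP, sub_self]
    have hQQ : Q * Q = Q := by
      rw [hQdef, Matrix.sub_mul, Matrix.one_mul, ← hQdef, hPQ, sub_zero]
    have hKH : Kᴴ = K := by
      rw [hKdef, kron_conjT, Matrix.conjTranspose_one, hQH]
    have hKK : K * K = K := by
      rw [hKdef, ← Matrix.mul_kronecker_mul, Matrix.one_mul, hQQ]
    have htr0 : (ρ * K).trace = 0 := by
      rw [hKdef, trace_mul_one_kron, hBQ, Matrix.trace_zero]
    have hSS : psdSqrt hρ * psdSqrt hρ = ρ := psdSqrt_mul_self hρ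
    have hSH : (psdSqrt hρ)ᴴ = psdSqrt hρ := psdSqrt_conjT hρ
    have hMM : (psdSqrt hρ * K)ᴴ * (psdSqrt hρ * K) = K * ρ * K := by
      rw [Matrix.conjTranspose_mul, hSH, hKH]
      have : K * psdSqrt hρ * (psdSqrt hρ * K) = K * (psdSqrt hρ * psdSqrt hρ) * K := by
        noncomm_ring
      rw [this, hSS]
    have htrM : ((psdSqrt hρ * K)ᴴ * (psdSqrt hρ * K)).trace = 0 := by
      rw [hMM, Matrix.trace_mul_cycle, hKK, Matrix.trace_mul_comm, htr0]
    have hSK : psdSqrt hρ * K = 0 := eq_zero_of_trace_conjT_mul_self htrM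
    have hρK : ρ * K = 0 := by
      rw [← hSS, Matrix.mul_assoc, hSK, Matrix.mul_zero]
    have hKρ : K * ρ = 0 := by
      have h2 := congrArg Matrix.conjTranspose hρK
      rwa [Matrix.conjTranspose_mul, hKH, hH.eq, Matrix.conjTranspose_zero] at h2
    have hLK : L = 1 - K := by
      rw [hLdef, hKdef, hQdef]
      have : (1 : Matrix ι ι ℂ) ⊗ₖ ((1 : Matrix κ κ ℂ) - P)
          = (1 : Matrix ι ι ℂ) ⊗ₖ (1 : Matrix κ κ ℂ) - (1 : Matrix ι ι ℂ) ⊗ₖ P := by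
        ext ⟨a, b⟩ ⟨c, d⟩
        by_cases h1 : a = c <;> by_cases h2 : b = d <;>
          simp [Matrix.kroneckerMap_apply, Matrix.sub_apply, mul_sub, Matrix.one_apply, h1, h2]
      rw [this, Matrix.one_kronecker_one, sub_sub_cancel]
    have hLρL : L * ρ * L = ρ := by
      rw [hLK, Matrix.sub_mul, Matrix.one_mul, hKρ, sub_zero, Matrix.mul_sub,
        Matrix.mul_one, hρK, sub_zero]
    have hLL : L * L = L := by
      rw [hLdef, ← Matrix.mul_kronecker_mul, Matrix.one_mul, hPP]
    have hLH : Lᴴ = L := by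
      rw [hLdef, kron_conjT, Matrix.conjTranspose_one, hPH]
    have hkey : (((m : ℝ) : ℂ) • L - ρ).PosSemidef := by
      have h1 : (((m : ℝ) : ℂ) • 1 - ρ).PosSemidef := smul_one_sub_psd hH hile
      have h2 := h1.mul_mul_conjTranspose_same L
      rw [hLH] at h2
      have h3 : L * ((((m : ℝ) : ℂ)) • 1 - ρ) * L = ((m : ℝ) : ℂ) • L - ρ := by
        calc L * ((((m : ℝ) : ℂ)) • 1 - ρ) * L
            = L * ((((m : ℝ) : ℂ)) • 1) * L - L * ρ * L := by noncomm_ring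
          _ = ((m : ℝ) : ℂ) • (L * L) - ρ := by
              rw [Matrix.mul_smul, Matrix.mul_one, Matrix.smul_mul, hLρL]
          _ = ((m : ℝ) : ℂ) • L - ρ := by rw [hLL]
      rwa [h3] at h2
    -- the candidate density operator
    set σ₀ : Matrix κ κ ℂ := (((n : ℝ)⁻¹ : ℝ) : ℂ) • P with hσdef
    have hσpsd : σ₀.PosSemidef := psd_smul hPpsd (by positivity)
    have hσtr : σ₀.trace = 1 := by
      rw [hσdef, Matrix.trace_smul, hPtr, smul_eq_mul, ← hndef]
      push_cast
      rw [inv_mul_cancel₀ hnC]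
    have hσdens : IsDensity σ₀ := ⟨hσpsd, hσtr⟩
    set lam : ℝ := Real.logb 2 m + Real.logb 2 n with hlam
    have h2lam : (2 : ℝ) ^ lam = m * n := by
      rw [hlam, Real.rpow_add two_pos, Real.rpow_logb two_pos (by norm_num) hmpos,
        Real.rpow_logb two_pos (by norm_num) (by exact_mod_cast hn)]
    have hmem : ((((2 : ℝ) ^ lam : ℝ) : ℂ) • ((1 : Matrix ι ι ℂ) ⊗ₖ σ₀) - ρ).PosSemidef := by
      have hs : ((((2 : ℝ) ^ lam : ℝ) : ℂ) • ((1 : Matrix ι ι ℂ) ⊗ₖ σ₀))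
          = ((m : ℝ) : ℂ) • L := by
        rw [hσdef, Matrix.kronecker_smul, smul_smul, ← hLdef, h2lam]
        congr 1
        push_cast
        rw [mul_assoc, mul_inv_cancel₀ hnC, mul_one]
      rw [hs]
      exact hkey
    -- lower bound on all Dmax exponents
    set cI : ℝ := (Fintype.card ι : ℝ) with hcIdef
    have hcI : 0 < cI := by
      rw [hcIdef]
      exact_mod_cast Fintype.card_pos
    set c : ℝ := Real.logb 2 (t / cI) with hcdef
    have hbound : ∀ σb : Matrix κ κ ℂ, IsDensity σb → ∀ l : ℝ,
        ((((2 : ℝ) ^ l : ℝ) : ℂ) • ((1 : Matrix ι ι ℂ) ⊗ₖ σb) - ρ).PosSemidef → c ≤ l := by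
      intro σb hσb l hl
      have h1 := psd_trace_re_nonneg hl
      have h2 : ((((2 : ℝ) ^ l : ℝ) : ℂ) • ((1 : Matrix ι ι ℂ) ⊗ₖ σb)).trace
          = (((2 : ℝ) ^ l * cI : ℝ) : ℂ) := by
        rw [Matrix.trace_smul, Matrix.trace_kronecker, Matrix.trace_one, hσb.2, smul_eq_mul,
          hcIdef]
        push_cast
        ring
      rw [Matrix.trace_sub, Complex.sub_re, h2, Complex.ofReal_re, ← htdef] at h1
      have hle2 : t / cI ≤ (2 : ℝ) ^ l := (div_le_iff₀ hcI).mpr (by linarith)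
      have hfin : c ≤ Real.logb 2 ((2 : ℝ) ^ l) := by
        rw [hcdef]
        exact Real.logb_le_logb_of_le one_lt_two (by positivity) hle2
      rwa [Real.logb_rpow (by norm_num) (by norm_num)] at hfin
    have hDle : Dmax ρ ((1 : Matrix ι ι ℂ) ⊗ₖ σ₀) ≤ lam := by
      rw [Dmax]
      exact csInf_le ⟨c, fun l hl => hbound σ₀ hσdens l hl⟩ hmem
    have hSlb : ∀ x ∈ {x : ℝ | ∃ σ : Matrix κ κ ℂ, IsDensity σ ∧
        x = Dmax ρ ((1 : Matrix ι ι ℂ) ⊗ₖ σ)}, min c 0 ≤ x := by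
      rintro x ⟨σb, hσb, rfl⟩
      rw [Dmax]
      rcases Set.eq_empty_or_nonempty {l : ℝ | ((((2 : ℝ) ^ l : ℝ) : ℂ) •
          ((1 : Matrix ι ι ℂ) ⊗ₖ σb) - ρ).PosSemidef} with he | hne2
      · rw [he, Real.sInf_empty]
        exact min_le_right _ _
      · exact le_trans (min_le_left _ _) (le_csInf hne2 fun l hl => hbound σb hσb l hl)
    have hSle : sInf {x : ℝ | ∃ σ : Matrix κ κ ℂ, IsDensity σ ∧
        x = Dmax ρ ((1 : Matrix ι ι ℂ) ⊗ₖ σ)} ≤ lam :=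
      le_trans (csInf_le ⟨min c 0, hSlb⟩ ⟨σ₀, hσdens, rfl⟩) hDle
    rw [HminCond, Hmin, H0, ge_iff_le, ← hmdef, ← hndef]
    rw [hlam] at hSle
    linarith

end QIT
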